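/- Let A₁, …, A_m be pairwise commuting positive definite n×n complex matrices and let w₁, …, w_m be positive reals with Σ_j w_j = 1. Then the unique positive definite matrix minimizing X ↦ Σ_{j=1}^m w_j Tr(A_j(log A_j − log X) + X − A_j) over positive definite matrices commuting with all A_j is the weighted arithmetic mean X = Σ_{j=1}^m w_j A_j. -/

import Mathlib

open Matrix
open scoped ComplexOrder

/-- The logarithm of a positive definite matrix, via the functional calculus. -/
noncomputable def matLog {n : ℕ} (A : Matrix (Fin n) (Fin n) ℂ) : Matrix (Fin n) (Fin n) ℂ :=
  cfc Real.log A

lemma scalar_klein {a b : ℝ} (ha : 0 < a) (hb : 0 < b) :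
    0 ≤ a * Real.log a - a * Real.log b + b - a ∧
      (a * Real.log a - a * Real.log b + b - a = 0 → a = b) := by
  have hdiv : Real.log (b / a) = Real.log b - Real.log a := Real.log_div hb.ne' ha.ne'
  have h1 : Real.log (b / a) ≤ b / a - 1 := Real.log_le_sub_one_of_pos (by positivity)
  constructor
  · have := mul_le_mul_of_nonneg_left h1 ha.le
    rw [hdiv] at this
    have : a * (Real.log b - Real.log a) ≤ a * (b / a - 1) := by
      exact mul_le_mul_of_nonneg_left (hdiv ▸ h1) ha.le
    have h2 : a * (b / a - 1) = b - a := by field_simp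
    nlinarith
  · intro h0
    by_contra hne
    have hba : b / a ≠ 1 := by
      intro h; exact hne (by field_simp at h; linarith)
    have h2 : Real.log (b / a) < b / a - 1 := Real.log_lt_sub_one_of_pos (by positivity) hba
    rw [hdiv] at h2
    have := mul_lt_mul_of_pos_left h2 ha
    have h3 : a * (b / a - 1) = b - a := by field_simp
    nlinarith

lemma trace_conj_diag {n : ℕ} (U : Matrix (Fin n) (Fin n) ℂ) (hU : star U * U = 1)
    (d : Fin n → ℂ) : (U * diagonal d * star U).trace = ∑ i, d i := by
  rw [trace_mul_cycle, hU, one_mul, trace_diagonal]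

lemma trace_two {n : ℕ} (U M : Matrix (Fin n) (Fin n) ℂ) (hU : star U * U = 1)
    (d e : Fin n → ℂ) :
    ((U * diagonal d * star U) * ((U * M) * diagonal e * star (U * M))).trace
      = ∑ i, ∑ j, d i * (e j * (M i j * star (M i j))) := by
  have h1 : (U * diagonal d * star U) * ((U * M) * diagonal e * star (U * M))
      = U * (diagonal d * (M * diagonal e * star M)) * star U := by
    rw [Matrix.star_mul]
    simp only [Matrix.mul_assoc]
    rw [← Matrix.mul_assoc (star U) U, hU, one_mul]
  rw [h1, trace_mul_cycle, ← Matrix.mul_assoc, hU, one_mul]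
  have h2 : ∀ i, (M * diagonal e * star M) i i = ∑ j, M i j * e j * star (M i j) := by
    intro i
    simp only [Matrix.mul_apply, Matrix.mul_diagonal, conjTranspose_apply]
    refine Finset.sum_congr rfl fun j _ => ?_
    congr 1
    simp [Matrix.diagonal_apply, mul_ite]
  simp only [Matrix.trace, Matrix.diag, Matrix.diagonal_mul, h2, Finset.mul_sum]
  exact Finset.sum_congr rfl fun i _ => Finset.sum_congr rfl fun j _ => by ring

lemma klein {n : ℕ} {P Q : Matrix (Fin n) (Fin n) ℂ} (hP : P.PosDef) (hQ : Q.PosDef) :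
    0 ≤ ((P * (matLog P - matLog Q) + Q - P).trace).re ∧
      (((P * (matLog P - matLog Q) + Q - P).trace).re = 0 → P = Q) := by
  classical
  have hPh := hP.1
  have hQh := hQ.1
  set U : Matrix (Fin n) (Fin n) ℂ := (hPh.eigenvectorUnitary : Matrix (Fin n) (Fin n) ℂ) with hUdef
  set V : Matrix (Fin n) (Fin n) ℂ := (hQh.eigenvectorUnitary : Matrix (Fin n) (Fin n) ℂ) with hVdef
  set p := hPh.eigenvalues with hpdef
  set q := hQh.eigenvalues with hqdef
  have hp : ∀ i, 0 < p i := hP.eigenvalues_pos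
  have hq : ∀ i, 0 < q i := hQ.eigenvalues_pos
  have hU1 : U * star U = 1 := mem_unitaryGroup_iff.mp hPh.eigenvectorUnitary.2
  have hU2 : star U * U = 1 := mem_unitaryGroup_iff'.mp hPh.eigenvectorUnitary.2
  have hV1 : V * star V = 1 := mem_unitaryGroup_iff.mp hQh.eigenvectorUnitary.2
  have hV2 : star V * V = 1 := mem_unitaryGroup_iff'.mp hQh.eigenvectorUnitary.2
  set M : Matrix (Fin n) (Fin n) ℂ := star U * V with hMdef
  have hV_eq : V = U * M := by
    rw [hMdef, ← Matrix.mul_assoc, hU1, one_mul]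
  have hM1 : M * star M = 1 := by
    rw [hMdef, Matrix.star_mul, star_star, Matrix.mul_assoc, ← Matrix.mul_assoc V, hV1,
      one_mul, hU2]
  have hM2 : star M * M = 1 := by
    rw [hMdef, Matrix.star_mul, star_star, Matrix.mul_assoc, ← Matrix.mul_assoc U, hU1,
      one_mul, hV2]
  set c : Fin n → Fin n → ℝ := fun i j => Complex.normSq (M i j) with hcdef
  have hc0 : ∀ i j, 0 ≤ c i j := fun i j => Complex.normSq_nonneg _
  have hstar : ∀ (z : ℂ), z * star z = (Complex.normSq z : ℂ) := fun z => Complex.mul_conj z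
  have hrow : ∀ i, ∑ j, c i j = 1 := by
    intro i
    have := congrFun (congrFun hM1 i) i
    rw [Matrix.mul_apply, Matrix.one_apply_eq] at this
    have h2 : ∑ j, (c i j : ℂ) = 1 := by
      rw [← this]
      exact Finset.sum_congr rfl fun j _ => by
        rw [Matrix.star_apply, hstar]
    exact_mod_cast (by push_cast at h2 ⊢; exact h2 : ((∑ j, c i j : ℝ) : ℂ) = 1)
  have hcol : ∀ j, ∑ i, c i j = 1 := by
    intro j
    have := congrFun (congrFun hM2 j) j
    rw [Matrix.mul_apply, Matrix.one_apply_eq] at this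
    have h2 : ∑ i, (c i j : ℂ) = 1 := by
      rw [← this]
      refine Finset.sum_congr rfl fun i _ => ?_
      rw [Matrix.star_apply, mul_comm, hstar]
    exact_mod_cast (by push_cast at h2 ⊢; exact h2 : ((∑ i, c i j : ℝ) : ℂ) = 1)
  -- spectral decompositions
  have hPd : P = U * diagonal (fun i => (p i : ℂ)) * star U := hPh.spectral_theorem
  have hQd : Q = V * diagonal (fun j => (q j : ℂ)) * star V := hQh.spectral_theorem
  have hlogP : matLog P = U * diagonal (fun i => (Real.log (p i) : ℂ)) * star U := by
    rw [matLog, hPh.cfc_eq]; rfl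
  have hlogQ : matLog Q = V * diagonal (fun j => (Real.log (q j) : ℂ)) * star V := by
    rw [matLog, hQh.cfc_eq]; rfl
  -- trace computations
  have t1 : (P * matLog P).trace = Complex.ofReal (∑ i, p i * Real.log (p i)) := by
    have h : P * matLog P
        = U * (diagonal (fun i => (p i : ℂ)) * diagonal (fun i => (Real.log (p i) : ℂ)))
          * star U := by
      rw [hlogP, hPd]
      simp only [Matrix.mul_assoc]
      rw [← Matrix.mul_assoc (star U) U, hU2, one_mul]
    rw [h, diagonal_mul_diagonal, trace_conj_diag U hU2]
    push_cast
    ring_nf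
  have t2 : (P * matLog Q).trace = Complex.ofReal (∑ i, ∑ j, p i * Real.log (q j) * c i j) := by
    rw [hlogQ, hPd, hV_eq, trace_two U M hU2]
    push_cast
    refine Finset.sum_congr rfl fun i _ => Finset.sum_congr rfl fun j _ => ?_
    rw [hstar]
    push_cast
    ring
  have t3 : Q.trace = Complex.ofReal (∑ j, q j) := by
    rw [hQd, trace_conj_diag V hV2]
    push_cast
    rfl
  have t4 : P.trace = Complex.ofReal (∑ i, p i) := by
    rw [hPd, trace_conj_diag U hU2]
    push_cast
    rfl
  have hsplit : (P * (matLog P - matLog Q) + Q - P).trace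
      = (P * matLog P).trace - (P * matLog Q).trace + Q.trace - P.trace := by
    rw [Matrix.mul_sub]
    simp [Matrix.trace_add, Matrix.trace_sub]
  have hre : ((P * (matLog P - matLog Q) + Q - P).trace).re
      = ∑ i, ∑ j, c i j * (p i * Real.log (p i) - p i * Real.log (q j) + q j - p i) := by
    rw [hsplit, t1, t2, t3, t4]
    simp only [Complex.sub_re, Complex.add_re, Complex.ofReal_re]
    have e1 : ∑ i, p i * Real.log (p i) = ∑ i, ∑ j, c i j * (p i * Real.log (p i)) := by
      refine Finset.sum_congr rfl fun i _ => ?_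
      rw [← Finset.sum_mul, hrow i, one_mul]
    have e3 : ∑ j, q j = ∑ i, ∑ j, c i j * q j := by
      rw [Finset.sum_comm]
      refine Finset.sum_congr rfl fun j _ => ?_
      rw [← Finset.sum_mul, hcol j, one_mul]
    have e4 : ∑ i, p i = ∑ i, ∑ j, c i j * p i := by
      refine Finset.sum_congr rfl fun i _ => ?_
      rw [← Finset.sum_mul, hrow i, one_mul]
    rw [e1, e3, e4]
    simp only [← Finset.sum_sub_distrib, ← Finset.sum_add_distrib]
    exact Finset.sum_congr rfl fun i _ => Finset.sum_congr rfl fun j _ => by ring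
  have hnonneg : ∀ i ∈ Finset.univ, ∀ j ∈ (Finset.univ : Finset (Fin n)),
      0 ≤ c i j * (p i * Real.log (p i) - p i * Real.log (q j) + q j - p i) :=
    fun i _ j _ => mul_nonneg (hc0 i j) (scalar_klein (hp i) (hq j)).1
  constructor
  · rw [hre]
    exact Finset.sum_nonneg fun i hi => Finset.sum_nonneg fun j hj => hnonneg i hi j hj
  · intro h0
    rw [hre] at h0
    have h1 := (Finset.sum_eq_zero_iff_of_nonneg
      (fun i hi => Finset.sum_nonneg fun j hj => hnonneg i hi j hj)).mp h0
    have key : ∀ i j, M i j = 0 ∨ p i = q j := by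
      intro i j
      have h2 := (Finset.sum_eq_zero_iff_of_nonneg
        (fun j hj => hnonneg i (Finset.mem_univ i) j hj)).mp
        (h1 i (Finset.mem_univ i)) j (Finset.mem_univ j)
      rcases mul_eq_zero.mp h2 with h | h
      · exact Or.inl (Complex.normSq_eq_zero.mp h)
      · exact Or.inr ((scalar_klein (hp i) (hq j)).2 h)
    have hDiag : M * diagonal (fun j => (q j : ℂ)) * star M
        = diagonal (fun i => (p i : ℂ)) := by
      ext i k
      rw [Matrix.mul_apply]
      calc ∑ j, (M * diagonal fun j => (q j : ℂ)) i j * star M j k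
          = ∑ j, (p i : ℂ) * (M i j * star (M k j)) := by
            refine Finset.sum_congr rfl fun j _ => ?_
            rw [Matrix.mul_diagonal, Matrix.star_apply]
            rcases key i j with h | h
            · simp [h]
            · rw [← h]; ring
        _ = (p i : ℂ) * (M * star M) i k := by
            rw [Matrix.mul_apply, Finset.mul_sum]
            exact Finset.sum_congr rfl fun j _ => by rw [Matrix.star_apply]
        _ = diagonal (fun i => (p i : ℂ)) i k := by
            rw [hM1]
            by_cases h : i = k <;> simp [h, Matrix.one_apply, Matrix.diagonal_apply]
    have hQ' : Q = U * (M * diagonal (fun j => (q j : ℂ)) * star M) * star U := by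
      rw [hQd, hV_eq, Matrix.star_mul]
      simp only [Matrix.mul_assoc]
    rw [hDiag] at hQ'
    rw [hPd, ← hQ']

lemma posdef_weighted_sum {n m : ℕ} (A : Fin m → Matrix (Fin n) (Fin n) ℂ)
    (hA : ∀ j, (A j).PosDef) (w : Fin m → ℝ) (hw : ∀ j, 0 < w j) (hm : 0 < m) :
    (∑ j, w j • A j).PosDef := by
  have hsm : ∀ j, w j • A j = ((w j : ℂ)) • A j := by
    intro j
    ext i k
    simp [Complex.real_smul]
  refine Matrix.PosDef.of_dotProduct_mulVec_pos ?_ ?_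
  · rw [Matrix.IsHermitian, conjTranspose_sum]
    refine Finset.sum_congr rfl fun j _ => ?_
    rw [hsm j, conjTranspose_smul, (hA j).1]
    norm_num
  · intro x hx
    have hmv : (∑ j, w j • A j) *ᵥ x = ∑ j, (w j : ℂ) • (A j *ᵥ x) := by
      simp_rw [hsm]
      funext i
      simp only [Matrix.mulVec, dotProduct, Matrix.sum_apply, Finset.sum_apply,
        Pi.smul_apply, smul_eq_mul, Matrix.smul_apply, Finset.sum_mul, Finset.mul_sum]
      rw [Finset.sum_comm]
      exact Finset.sum_congr rfl fun j _ => Finset.sum_congr rfl fun k _ => by ring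
    have hds : ∀ (v : Fin m → Fin n → ℂ), star x ⬝ᵥ (∑ j, v j) = ∑ j, star x ⬝ᵥ v j := by
      intro v
      simp only [dotProduct, Finset.sum_apply, Finset.mul_sum]
      exact Finset.sum_comm
    rw [hmv, hds]
    have : ∀ j ∈ Finset.univ, (0:ℂ) < star x ⬝ᵥ (w j : ℂ) • (A j *ᵥ x) := by
      intro j _
      rw [dotProduct_smul]
      have h1 : (0:ℂ) < (w j : ℂ) := Complex.zero_lt_real.mpr (hw j)
      have h2 := (hA j).dotProduct_mulVec_pos hx
      calc (0:ℂ) = (w j : ℂ) * 0 := by ring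
        _ < (w j : ℂ) * (star x ⬝ᵥ (A j *ᵥ x)) := by
            exact mul_lt_mul_of_pos_left h2 h1
    exact Finset.sum_pos this ⟨⟨0, hm⟩, Finset.mem_univ _⟩

/-- For pairwise commuting positive definite `A₁, …, A_m` and positive
weights summing to `1`, a positive definite `X₀` commuting with all `A_j` minimizes the
weighted sum of relative entropies `X ↦ Σ_j w_j Tr(A_j(log A_j − log X) + X − A_j)` over
positive definite matrices commuting with all `A_j` if and only if `X₀ = Σ_j w_j A_j`, the
weighted arithmetic mean. -/
theorem commutative_entropy_barycenter {n m : ℕ}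
    (A : Fin m → Matrix (Fin n) (Fin n) ℂ) (hA : ∀ j, (A j).PosDef)
    (hAcomm : ∀ j k, Commute (A j) (A k))
    (w : Fin m → ℝ) (hw : ∀ j, 0 < w j) (hw1 : ∑ j, w j = 1)
    (X₀ : Matrix (Fin n) (Fin n) ℂ) (hX₀ : X₀.PosDef) (hX₀A : ∀ j, Commute (A j) X₀) :
    (∀ X : Matrix (Fin n) (Fin n) ℂ, X.PosDef → (∀ j, Commute (A j) X) →
        ∑ j, w j * ((A j * (matLog (A j) - matLog X₀) + X₀ - A j).trace).re ≤
          ∑ j, w j * ((A j * (matLog (A j) - matLog X) + X - A j).trace).re) ↔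
      X₀ = ∑ j, w j • A j := by
  classical
  have hm : 0 < m := by
    rcases Nat.eq_zero_or_pos m with h | h
    · subst h; simp at hw1
    · exact h
  set Abar := ∑ j, w j • A j with hAbar
  have hAbar_pd : Abar.PosDef := posdef_weighted_sum A hA w hw hm
  have hAbar_comm : ∀ j, Commute (A j) Abar := by
    intro j
    exact Finset.sum_induction _ _ (fun a b => Commute.add_right) (Commute.zero_right _)
      (fun k _ => (hAcomm j k).smul_right (w k))
  have hbar_tr : ∀ L : Matrix (Fin n) (Fin n) ℂ,
      ((Abar * L).trace).re = ∑ j, w j * ((A j * L).trace).re := by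
    intro L
    have h1 : Abar * L = ∑ j, w j • (A j * L) := by
      rw [hAbar, Finset.sum_mul]
      exact Finset.sum_congr rfl fun j _ => smul_mul_assoc _ _ _
    rw [h1, trace_sum, Complex.re_sum]
    refine Finset.sum_congr rfl fun j _ => ?_
    rw [Matrix.trace_smul, Complex.real_smul, Complex.re_ofReal_mul]
  have htrA : (Abar.trace).re = ∑ j, w j * ((A j).trace).re := by
    simpa using hbar_tr 1
  have key : ∀ X : Matrix (Fin n) (Fin n) ℂ,
      (∑ j, w j * ((A j * (matLog (A j) - matLog X) + X - A j).trace).re)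
        = (∑ j, w j * ((A j * (matLog (A j) - matLog Abar) + Abar - A j).trace).re)
          + ((Abar * (matLog Abar - matLog X) + X - Abar).trace).re := by
    have expand : ∀ Y : Matrix (Fin n) (Fin n) ℂ,
        (∑ j, w j * ((A j * (matLog (A j) - matLog Y) + Y - A j).trace).re)
          = (∑ j, w j * ((A j * matLog (A j)).trace).re) - ((Abar * matLog Y).trace).re
            + (Y.trace).re - (Abar.trace).re := by
      intro Y
      have h1 : ∀ j, ((A j * (matLog (A j) - matLog Y) + Y - A j).trace).re
          = ((A j * matLog (A j)).trace).re - ((A j * matLog Y).trace).re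
            + (Y.trace).re - ((A j).trace).re := by
        intro j
        rw [Matrix.mul_sub]
        simp [Matrix.trace_add, Matrix.trace_sub, Complex.add_re, Complex.sub_re]
      simp only [h1]
      rw [hbar_tr (matLog Y), htrA]
      simp only [mul_sub, mul_add]
      rw [Finset.sum_sub_distrib, Finset.sum_add_distrib, Finset.sum_sub_distrib,
        ← Finset.sum_mul, hw1, one_mul]
    intro X
    have g : ((Abar * (matLog Abar - matLog X) + X - Abar).trace).re
        = ((Abar * matLog Abar).trace).re - ((Abar * matLog X).trace).re
          + (X.trace).re - (Abar.trace).re := by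
      rw [Matrix.mul_sub]
      simp [Matrix.trace_add, Matrix.trace_sub, Complex.add_re, Complex.sub_re]
    rw [expand X, expand Abar, g]
    ring
  constructor
  · intro hmin
    have h1 := hmin Abar hAbar_pd hAbar_comm
    have h0 : ((Abar * (matLog Abar - matLog Abar) + Abar - Abar).trace).re = 0 := by simp
    rw [key X₀, key Abar, h0] at h1
    have h2 := (klein hAbar_pd hX₀).1
    have h3 : ((Abar * (matLog Abar - matLog X₀) + X₀ - Abar).trace).re = 0 :=
      le_antisymm (by linarith) h2
    exact ((klein hAbar_pd hX₀).2 h3).symm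
  · intro h X hX hXcomm
    rw [key X, key X₀, h]
    have h0 : ((Abar * (matLog Abar - matLog Abar) + Abar - Abar).trace).re = 0 := by simp
    rw [h0]
    linarith [(klein hAbar_pd hX).1]
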